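/- arXiv:2012.03467 — 2 statements merged into one kernel-verified Lean document; each statement's English description precedes it below -/
import Mathlib

section
/- Let z = (r; u) ∈ ℍ^{d+1} in polar coordinates with r ≥ 1 and let 1 ≤ ρ. Then the volume of B⁺(z,ρ) := B(z,ρ) ∩ B(0,r) satisfies Vol(B⁺(z,ρ)) ≥ c · e^{d(ρ ∧ r)/2} for some constant c > 0 depending only on d. -/
open Real MeasureTheory

set_option maxHeartbeats 1000000

noncomputable section

/-- Inverse hyperbolic cosine. -/
def arcosh (x : ℝ) : ℝ := Real.log (x + Real.sqrt (x ^ 2 - 1))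

/-- The hyperbolic distance on `ℍ^{d+1}` in the Poincaré ball model. -/
def hDist {d : ℕ} (z w : EuclideanSpace ℝ (Fin (d + 1))) : ℝ :=
  _root_.arcosh (1 + 2 * ‖z - w‖ ^ 2 / ((1 - ‖z‖ ^ 2) * (1 - ‖w‖ ^ 2)))

/-- The hyperbolic volume measure on `ℍ^{d+1}` in the ball model. -/
def hVolume (d : ℕ) : Measure (EuclideanSpace ℝ (Fin (d + 1))) :=
  (volume.restrict (Metric.ball (0 : EuclideanSpace ℝ (Fin (d + 1))) 1)).withDensity
    (fun x => ENNReal.ofReal ((2 / (1 - ‖x‖ ^ 2)) ^ (d + 1)))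

/-- The point of `ℍ^{d+1}` with polar coordinates `(r; u)` around the origin. -/
def polar {d : ℕ} (r : ℝ) (u : EuclideanSpace ℝ (Fin (d + 1))) :
    EuclideanSpace ℝ (Fin (d + 1)) :=
  Real.tanh (r / 2) • u

/-- `B⁺(z,ρ) = B(z,ρ) ∩ B(0, d(0,z))`: the part of the hyperbolic ball of radius `ρ`
around `z` lying strictly closer to the origin than `z`. -/
def Bplus {d : ℕ} (z : EuclideanSpace ℝ (Fin (d + 1))) (ρ : ℝ) :
    Set (EuclideanSpace ℝ (Fin (d + 1))) :=
  {w | ‖w‖ < 1 ∧ hDist z w < ρ ∧ hDist 0 w < hDist 0 z}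

/-! ### Auxiliary lemmas -/

lemma arcosh_strictMonoAux {a b : ℝ} (ha : 1 ≤ a) (hab : a < b) : _root_.arcosh a < _root_.arcosh b := by
  unfold _root_.arcosh
  have h1 : Real.sqrt (a ^ 2 - 1) ≤ Real.sqrt (b ^ 2 - 1) := by
    apply Real.sqrt_le_sqrt; nlinarith
  have h2 : (0:ℝ) < a + Real.sqrt (a ^ 2 - 1) := by
    have := Real.sqrt_nonneg (a ^ 2 - 1); linarith
  exact Real.log_lt_log h2 (by linarith)

lemma arcosh_lt_of {A ρ : ℝ} (hA : 1 ≤ A) (h : 2 * A < Real.exp ρ) : _root_.arcosh A < ρ := by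
  unfold _root_.arcosh
  have h1 : Real.sqrt (A ^ 2 - 1) ≤ A := by
    calc Real.sqrt (A ^ 2 - 1) ≤ Real.sqrt (A ^ 2) := Real.sqrt_le_sqrt (by nlinarith)
    _ = A := by rw [Real.sqrt_sq (by linarith)]
  have h2 : (0:ℝ) < A + Real.sqrt (A ^ 2 - 1) := by
    have := Real.sqrt_nonneg (A ^ 2 - 1); linarith
  calc Real.log (A + Real.sqrt (A ^ 2 - 1)) < Real.log (Real.exp ρ) :=
        Real.log_lt_log h2 (by linarith)
    _ = ρ := Real.log_exp ρ

lemma hDist_zero_left {d : ℕ} (w : EuclideanSpace ℝ (Fin (d + 1))) :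
    hDist 0 w = _root_.arcosh (1 + 2 * ‖w‖ ^ 2 / (1 - ‖w‖ ^ 2)) := by
  unfold hDist
  rw [zero_sub, norm_neg, norm_zero]
  norm_num

lemma box_volume (d : ℕ) (α β δ' : ℝ) :
    volume ((MeasurableEquiv.toLp 2 (Fin (d+1) → ℝ)).symm ⁻¹'
      (Set.univ.pi fun i => Set.Icc (if i = 0 then α else -δ') (if i = 0 then β else δ'))) =
      ENNReal.ofReal (β - α) * ENNReal.ofReal (2*δ') ^ d := by
  rw [(EuclideanSpace.volume_preserving_symm_measurableEquiv_toLp (Fin (d+1))).measure_preimage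
    (MeasurableSet.univ_pi fun i => measurableSet_Icc).nullMeasurableSet]
  rw [volume_pi_pi]
  rw [Fin.prod_univ_succ]
  simp only [if_pos rfl, Fin.succ_ne_zero, if_neg, if_false]
  simp only [Real.volume_Icc, Finset.prod_const, Finset.card_univ, Fintype.card_fin]
  congr 2
  ring_nf

lemma hVolume_ge (d : ℕ) (S : Set (EuclideanSpace ℝ (Fin (d+1)))) (hSm : MeasurableSet S)
    (hSb : S ⊆ Metric.ball 0 1) (K : ℝ)
    (hK : ∀ x ∈ S, K ≤ (2 / (1 - ‖x‖ ^ 2)) ^ (d + 1)) :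
    ENNReal.ofReal K * volume S ≤ hVolume d S := by
  have hg : Measurable fun x : EuclideanSpace ℝ (Fin (d+1)) =>
      ENNReal.ofReal ((2 / (1 - ‖x‖ ^ 2)) ^ (d + 1)) :=
    ((measurable_const.div (measurable_const.sub (measurable_norm.pow_const 2))).pow_const
      (d+1)).ennreal_ofReal
  rw [hVolume, withDensity_apply _ hSm, Measure.restrict_restrict hSm,
    Set.inter_eq_self_of_subset_left hSb]
  calc ENNReal.ofReal K * volume S = ∫⁻ _ in S, ENNReal.ofReal K := by
        rw [setLIntegral_const, mul_comm]
    _ ≤ ∫⁻ x in S, ENNReal.ofReal ((2 / (1 - ‖x‖ ^ 2)) ^ (d + 1)) :=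
        setLIntegral_mono hg fun x hx => ENNReal.ofReal_le_ofReal (hK x hx)


/-! ### Arithmetic auxiliary lemmas -/

section Arith
variable {T E Q δ : ℝ}

lemma auxT_pos (hE0 : 0 < E) (hEh : E ≤ 1/2) (hTid : T * (1 + E) = 1 - E) : 0 < T := by
  nlinarith

lemma auxT_lt_one (hE0 : 0 < E) (hTid : T * (1 + E) = 1 - E) : T < 1 := by
  nlinarith

lemma auxT_third (hE0 : 0 < E) (hEh : E ≤ 1/2) (hTid : T * (1 + E) = 1 - E) : 1/3 ≤ T := by
  nlinarith

lemma aux_alpha_pos (hE0 : 0 < E) (hEh : E ≤ 1/2) (hTid : T * (1 + E) = 1 - E) :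
    0 < T - E/2 := by
  have := auxT_third hE0 hEh hTid; linarith

lemma aux_beta (hE0 : 0 < E) (hEh : E ≤ 1/2) (hTid : T * (1 + E) = 1 - E)
    (hδ : δ^2 ≤ E/16) : (T - E/4)^2 + δ^2 < T^2 := by
  have h3 := auxT_third hE0 hEh hTid
  have h1 : T^2 - (T - E/4)^2 = (E/4) * (2*T - E/4) := by ring
  nlinarith [mul_nonneg hE0.le (by linarith : (0:ℝ) ≤ T - 1/3)]

lemma aux_1mT2 (hE0 : 0 < E) (hEh : E ≤ 1/2) (hTid : T * (1 + E) = 1 - E) :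
    16*E/9 ≤ 1 - T^2 := by
  have h1 : (1 - T) * (1 + E) = 2*E := by linarith
  have h2 : (1 + T) * (1 + E) = 2 := by linarith
  have h3 : (1 - T^2) * (1 + E)^2 = 4*E := by nlinarith [h1, h2]
  have hT0 := auxT_pos hE0 hEh hTid
  have hT1 := auxT_lt_one hE0 hTid
  have hpos : 0 ≤ 1 - T^2 := by nlinarith
  have h9 : 0 ≤ 9 - 4*(1+E)^2 := by nlinarith
  nlinarith [mul_nonneg hpos h9, h3]

lemma aux_1malpha (hE0 : 0 < E) (hEh : E ≤ 1/2) (hTid : T * (1 + E) = 1 - E) :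
    1 - (T - E/2)^2 ≤ 5*E := by
  have hT1 := auxT_lt_one hE0 hTid
  have hα0 := aux_alpha_pos hE0 hEh hTid
  have h1 : 1 - T ≤ 2*E := by nlinarith
  have h2 : 1 - (T - E/2) ≤ 5*E/2 := by linarith
  have h3 : 1 + (T - E/2) ≤ 2 := by linarith
  nlinarith

lemma aux_sq_lt {n p α β δ T : ℝ} (hn : n ≤ p^2 + δ^2) (hpα : α ≤ p) (hpβ : p ≤ β)
    (hα0 : 0 < α) (hβδ : β^2 + δ^2 < T^2) : n < T^2 := by nlinarith

lemma aux_lt_of_sq_lt {a T : ℝ} (ha : 0 ≤ a) (h : a^2 < T^2) (hT : 0 < T) : a < T := by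
  nlinarith

lemma aux_one_sub_sq_pos {a : ℝ} (ha : 0 ≤ a) (h1 : a < 1) : 0 < 1 - a^2 := by nlinarith

lemma aux_sq_mono {a α : ℝ} (hα : 0 ≤ α) (h : α ≤ a) : α^2 ≤ a^2 := by nlinarith

lemma aux_sq_le {t c : ℝ} (h0 : 0 ≤ t) (h1 : t ≤ c) : t^2 ≤ c^2 := by nlinarith

lemma aux_den {E a b : ℝ} (hE : 0 < E) (h : 16*E/9 ≤ a) (hab : a ≤ b) : 3*E^2 ≤ a*b := by
  nlinarith

lemma aux_QE {Q E : ℝ} (hE0 : 0 < E) (hQE : Q * E ≤ 1) : Q * E^2/16 ≤ E/16 := by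
  nlinarith

lemma aux_frac_mono {a T : ℝ} (ha : 0 ≤ a) (haT : a < T^2) (hT1 : T^2 < 1) :
    2*a*(1 - T^2) < 2*T^2*(1 - a) := by nlinarith

end Arith

/-- For `z = (r; u)` with `r ≥ 1` and `ρ ≥ 1`, the hyperbolic volume of
`B⁺(z,ρ)` is at least `c · e^{d(ρ ∧ r)/2}` for a constant `c > 0` depending only
on `d`. -/
theorem volume_Bplus_lower_bound (d : ℕ) (hd : 1 ≤ d) :
    ∃ c : ℝ, 0 < c ∧ ∀ (r ρ : ℝ), 1 ≤ r → 1 ≤ ρ →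
      ∀ u : EuclideanSpace ℝ (Fin (d + 1)), ‖u‖ = 1 →
        ENNReal.ofReal (c * Real.exp (d * min ρ r / 2)) ≤
          hVolume d (Bplus (polar r u) ρ) := by
  have hd0 : (0:ℝ) < d := by exact_mod_cast Nat.lt_of_lt_of_le Nat.zero_lt_one hd
  have hsd : (0:ℝ) < Real.sqrt d := Real.sqrt_pos.mpr hd0
  refine ⟨(2/5)^(d+1) / (4 * (2 * Real.sqrt d)^d), by positivity, ?_⟩
  intro r ρ hr hρ u hu
  set q := min ρ r with hqdef
  have hq1 : 1 ≤ q := le_min hρ hr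
  have hqr : q ≤ r := min_le_right _ _
  have hqρ : q ≤ ρ := min_le_left _ _
  set E := Real.exp (-r) with hEdef
  set Q := Real.exp q with hQdef
  have hE0 : 0 < E := Real.exp_pos _
  have hQ0 : 0 < Q := Real.exp_pos _
  have hEhalf : E ≤ 1/2 := by
    have h1 : E ≤ Real.exp (-1) := Real.exp_le_exp.2 (by linarith only [hr])
    have h2 : Real.exp (-1) ≤ 1/2 := by
      rw [Real.exp_neg]
      have : (2:ℝ) ≤ Real.exp 1 := by
        have := Real.add_one_le_exp (1:ℝ); linarith
      rw [inv_le_comm₀ (by positivity) (by norm_num)]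
      linarith only [this]
    linarith only [h1, h2]
  have hQe : (2.7:ℝ) ≤ Q := by
    have h1 : Real.exp 1 ≤ Q := Real.exp_le_exp.2 hq1
    have := Real.exp_one_gt_d9
    linarith only [h1, this]
  have hQE : Q * E ≤ 1 := by
    rw [hQdef, hEdef, ← Real.exp_add]
    exact Real.exp_le_one_iff.mpr (by linarith only [hqr])
  have hQρ : Q ≤ Real.exp ρ := Real.exp_le_exp.2 hqρ
  -- the tanh identity
  set T := Real.tanh (r/2) with hTdef
  have hTid : T * (1 + E) = 1 - E := by
    have hGF : Real.exp (r/2) * Real.exp (-(r/2)) = 1 := by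
      rw [← Real.exp_add]; norm_num
    have hFF : Real.exp (-(r/2)) * Real.exp (-(r/2)) = E := by
      rw [← Real.exp_add, hEdef]; ring_nf
    have hGE : Real.exp (r/2) * E = Real.exp (-(r/2)) := by
      rw [hEdef, ← Real.exp_add]; ring_nf
    have hden : 0 < Real.exp (r/2) + Real.exp (-(r/2)) := by positivity
    have hT' : T = (Real.exp (r/2) - Real.exp (-(r/2))) / (Real.exp (r/2) + Real.exp (-(r/2))) := by
      rw [hTdef, Real.tanh_eq_sinh_div_cosh, Real.sinh_eq, Real.cosh_eq]
      field_simp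
    rw [hT', div_mul_eq_mul_div, div_eq_iff (ne_of_gt hden)]
    linear_combination 2 * hGE
  have hT0 : 0 < T := auxT_pos hE0 hEhalf hTid
  have hT1 : T < 1 := auxT_lt_one hE0 hTid
  -- parameters
  set δ : ℝ := Real.exp (q/2) * E / 4 with hδdef
  set δ' : ℝ := δ / Real.sqrt d with hδ'def
  set α : ℝ := T - E/2 with hαdef
  set β : ℝ := T - E/4 with hβdef
  have hδ0 : 0 < δ := by positivity
  have hδ'0 : 0 < δ' := by positivity
  have hδsq : δ^2 = Q * E^2 / 16 := by
    have h : Real.exp (q/2) * Real.exp (q/2) = Q := by rw [hQdef, ← Real.exp_add]; ring_nf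
    rw [hδdef]
    linear_combination (E^2/16) * h
  have hδE : δ^2 ≤ E/16 := by
    rw [hδsq]
    exact aux_QE hE0 hQE
  have hα0 : 0 < α := aux_alpha_pos hE0 hEhalf hTid
  have hαβ : α < β := by rw [hαdef, hβdef]; linarith only [hE0]
  have hβT : β < T := by rw [hβdef]; linarith only [hE0]
  have hβδT : β^2 + δ^2 < T^2 := aux_beta hE0 hEhalf hTid hδE
  have h1mT2 : 16*E/9 ≤ 1 - T^2 := aux_1mT2 hE0 hEhalf hTid
  have h1mα2 : 1 - α^2 ≤ 5*E := aux_1malpha hE0 hEhalf hTid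
  -- the isometry
  set e₀ : EuclideanSpace ℝ (Fin (d+1)) := EuclideanSpace.single 0 1 with he₀def
  have he₀ : ‖e₀‖ = 1 := by simp [he₀def, EuclideanSpace.norm_single]
  obtain ⟨f, hf⟩ : ∃ f : EuclideanSpace ℝ (Fin (d+1)) ≃ₗᵢ[ℝ] EuclideanSpace ℝ (Fin (d+1)),
      f u = e₀ := ⟨Submodule.reflection (ℝ ∙ (u - e₀))ᗮ, Submodule.reflection_sub (hu.trans he₀.symm)⟩
  -- the box
  set Sp : Set (Fin (d+1) → ℝ) :=
    Set.univ.pi fun i => Set.Icc (if i = 0 then α else -δ') (if i = 0 then β else δ') with hSpdef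
  set S₀ : Set (EuclideanSpace ℝ (Fin (d+1))) :=
    (MeasurableEquiv.toLp 2 (Fin (d+1) → ℝ)).symm ⁻¹' Sp with hS₀def
  set S : Set (EuclideanSpace ℝ (Fin (d+1))) := f ⁻¹' S₀ with hSdef
  have hSpm : MeasurableSet Sp := MeasurableSet.univ_pi fun i => measurableSet_Icc
  have hS₀m : MeasurableSet S₀ := (MeasurableEquiv.toLp 2 (Fin (d+1) → ℝ)).symm.measurable hSpm
  have hSm : MeasurableSet S := hS₀m.preimage f.continuous.measurable
  set z := polar r u with hzdef
  have hz : ‖z‖ = T := by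
    rw [hzdef, polar, norm_smul, hu, Real.norm_eq_abs, abs_of_pos hT0, mul_one]
  -- pointwise facts on S
  have hmem : ∀ x ∈ S, α ≤ (f x) 0 ∧ (f x) 0 ≤ β ∧ ‖x‖^2 ≤ ((f x) 0)^2 + δ^2 ∧
      (inner ℝ x u : ℝ) = (f x) 0 := by
    intro x hx
    have hx' : ∀ i, (f x) i ∈ Set.Icc (if i = 0 then α else -δ')
        (if i = 0 then β else δ') := by
      intro i
      have := hx
      rw [hSdef, Set.mem_preimage, hS₀def, Set.mem_preimage, hSpdef, Set.mem_pi] at this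
      exact this i (Set.mem_univ i)
    obtain ⟨h0l, h0r⟩ : (f x) 0 ∈ Set.Icc α β := by
      have := hx' 0; simpa using this
    refine ⟨h0l, h0r, ?_, ?_⟩
    · have hnx : ‖x‖^2 = ∑ i, ((f x) i)^2 := by
        rw [← f.norm_map x, EuclideanSpace.norm_eq, Real.sq_sqrt (by positivity)]
        simp [sq_abs]
      rw [hnx, Fin.sum_univ_succ]
      have hbound : ∀ i : Fin d, ((f x) i.succ)^2 ≤ δ'^2 := by
        intro i
        have := hx' i.succ
        rw [if_neg (Fin.succ_ne_zero i), if_neg (Fin.succ_ne_zero i)] at this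
        obtain ⟨h1, h2⟩ := this
        exact sq_le_sq' h1 h2
      have hsum : ∑ i : Fin d, ((f x) i.succ)^2 ≤ d * δ'^2 := by
        calc ∑ i : Fin d, ((f x) i.succ)^2 ≤ ∑ _i : Fin d, δ'^2 :=
              Finset.sum_le_sum fun i _ => hbound i
          _ = d * δ'^2 := by rw [Finset.sum_const, Finset.card_univ, Fintype.card_fin,
              nsmul_eq_mul]
      have hδ'2 : (d:ℝ) * δ'^2 = δ^2 := by
        rw [hδ'def, div_pow, Real.sq_sqrt hd0.le]
        field_simp
      linarith only [hsum, hδ'2]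
    · calc (inner ℝ x u : ℝ) = inner ℝ (f x) (f u) := (f.inner_map_map x u).symm
        _ = inner ℝ (f x) e₀ := by rw [hf]
        _ = (f x) 0 := by rw [he₀def, EuclideanSpace.inner_single_right]; simp
  -- S is contained in Bplus
  have hsub : S ⊆ Bplus z ρ := by
    intro x hx
    obtain ⟨h0l, h0r, hxn, hip⟩ := hmem x hx
    have hxT2 : ‖x‖^2 < T^2 := aux_sq_lt hxn h0l h0r hα0 hβδT
    have hxT : ‖x‖ < T := aux_lt_of_sq_lt (norm_nonneg x) hxT2 hT0
    have hx1 : ‖x‖ < 1 := hxT.trans hT1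
    have h1mx0 : 0 < 1 - ‖x‖^2 := aux_one_sub_sq_pos (norm_nonneg x) hx1
    have h1mxT : 1 - T^2 ≤ 1 - ‖x‖^2 := by linarith only [hxT2]
    have hαx : α ≤ ‖x‖ := by
      have := real_inner_le_norm x u
      rw [hip, hu, mul_one] at this
      linarith only [this, h0l]
    have h1mxα : 1 - ‖x‖^2 ≤ 5*E := by
      have := aux_sq_mono hα0.le hαx; linarith only [this, h1mα2]
    refine ⟨hx1, ?_, ?_⟩
    · -- hDist z x < ρ
      have hzx : ‖z - x‖^2 ≤ E^2/4 + Q*E^2/16 := by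
        have hin : (inner ℝ z x : ℝ) = T * (f x) 0 := by
          rw [hzdef, polar, real_inner_smul_left, ← hTdef, real_inner_comm, hip]
        have h1 : ‖z - x‖^2 = ‖z‖^2 - 2 * (inner ℝ z x : ℝ) + ‖x‖^2 := by
          rw [@norm_sub_sq_real]
        rw [h1, hz, hin]
        have h2 : T^2 - 2*(T * (f x) 0) + ‖x‖^2 ≤ (T - (f x) 0)^2 + δ^2 := by
          have heq : (T - (f x) 0)^2 = T^2 - 2*(T * (f x) 0) + ((f x) 0)^2 := by ring
          linarith only [heq, hxn]
        have h3 : (T - (f x) 0)^2 ≤ E^2/4 := by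
          have l1 : T - (f x) 0 ≤ E/2 := by rw [hαdef] at h0l; linarith only [h0l]
          have l2 : 0 ≤ T - (f x) 0 := by rw [hβdef] at h0r; linarith only [h0r, hE0]
          have := aux_sq_le l2 l1
          linarith only [this]
        rw [hδsq] at h2
        linarith only [h2, h3]
      have hden : 3*E^2 ≤ (1 - ‖z‖^2) * (1 - ‖x‖^2) := by
        rw [hz]
        exact aux_den hE0 h1mT2 h1mxT
      have hdenpos : 0 < (1 - ‖z‖^2) * (1 - ‖x‖^2) :=
        lt_of_lt_of_le (by positivity) hden
      set A := 1 + 2 * ‖z - x‖ ^ 2 / ((1 - ‖z‖ ^ 2) * (1 - ‖x‖ ^ 2)) with hAdef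
      have hA1 : 1 ≤ A := by
        rw [hAdef]
        have : 0 ≤ 2 * ‖z - x‖ ^ 2 / ((1 - ‖z‖ ^ 2) * (1 - ‖x‖ ^ 2)) :=
          div_nonneg (by positivity) hdenpos.le
        linarith only [this]
      have hAle : A ≤ 7/6 + Q/24 := by
        rw [hAdef]
        have h4 : 2 * ‖z - x‖ ^ 2 / ((1 - ‖z‖ ^ 2) * (1 - ‖x‖ ^ 2)) ≤
            (2 * (E^2/4 + Q*E^2/16)) / (3*E^2) := by
          apply div_le_div₀ (by positivity) (by linarith only [hzx]) (by positivity) hden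
        have h5 : (2 * (E^2/4 + Q*E^2/16)) / (3*E^2) = 1/6 + Q/24 := by
          field_simp
          ring
        rw [h5] at h4
        linarith only [h4]
      show hDist z x < ρ
      rw [hDist]
      have h6 : 7/3 + Q/12 < Q := by linarith only [hQe]
      exact arcosh_lt_of hA1 (by linarith only [hAle, h6, hQρ])
    · -- hDist 0 x < hDist 0 z
      have hz0 : hDist 0 z = _root_.arcosh (1 + 2 * ‖z‖ ^ 2 / (1 - ‖z‖ ^ 2)) := hDist_zero_left z
      rw [hDist_zero_left, hz0]
      apply arcosh_strictMonoAux
      · have : 0 ≤ 2 * ‖x‖ ^ 2 / (1 - ‖x‖ ^ 2) := div_nonneg (by positivity) h1mx0.le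
        linarith
      · have h1mz0 : 0 < 1 - ‖z‖^2 := by
          rw [hz]; exact aux_one_sub_sq_pos hT0.le hT1
        have : 2 * ‖x‖ ^ 2 / (1 - ‖x‖ ^ 2) < 2 * ‖z‖ ^ 2 / (1 - ‖z‖ ^ 2) := by
          rw [div_lt_div_iff₀ h1mx0 h1mz0, hz]
          have hT2lt : T^2 < 1 := by
            have := aux_one_sub_sq_pos hT0.le hT1; linarith only [this]
          have := aux_frac_mono (by positivity : (0:ℝ) ≤ ‖x‖^2) hxT2 hT2lt
          linarith only [this]
        linarith only [this]
  -- S is inside the unit ball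
  have hSball : S ⊆ Metric.ball 0 1 := by
    intro x hx
    have := hsub hx
    rw [Metric.mem_ball, dist_zero_right]
    exact this.1
  -- density bound on S
  have hdens : ∀ x ∈ S, (2/(5*E))^(d+1) ≤ (2 / (1 - ‖x‖ ^ 2)) ^ (d + 1) := by
    intro x hx
    obtain ⟨h0l, h0r, hxn, hip⟩ := hmem x hx
    have hxT2 : ‖x‖^2 < T^2 := aux_sq_lt hxn h0l h0r hα0 hβδT
    have hxT : ‖x‖ < T := aux_lt_of_sq_lt (norm_nonneg x) hxT2 hT0
    have h1mx0 : 0 < 1 - ‖x‖^2 := aux_one_sub_sq_pos (norm_nonneg x) (hxT.trans hT1)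
    have hαx : α ≤ ‖x‖ := by
      have := real_inner_le_norm x u
      rw [hip, hu, mul_one] at this
      linarith only [this, h0l]
    have h1mxα : 1 - ‖x‖^2 ≤ 5*E := by
      have := aux_sq_mono hα0.le hαx; linarith only [this, h1mα2]
    apply pow_le_pow_left₀ (by positivity)
    apply div_le_div₀ (by norm_num) le_rfl (by positivity) h1mxα
  -- volume of S
  have hSvol : volume S = ENNReal.ofReal (β - α) * ENNReal.ofReal (2*δ') ^ d := by
    rw [hSdef, f.measurePreserving.measure_preimage hS₀m.nullMeasurableSet, hS₀def, hSpdef]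
    exact box_volume d α β δ'
  -- putting it together
  have hmain : ENNReal.ofReal ((2/(5*E))^(d+1)) * volume S ≤ hVolume d (Bplus z ρ) :=
    le_trans (hVolume_ge d S hSm hSball _ hdens) (measure_mono hsub)
  refine le_trans ?_ hmain
  have hβα : β - α = E/4 := by rw [hαdef, hβdef]; ring
  have hK0 : (0:ℝ) ≤ (2/(5*E))^(d+1) :=
    pow_nonneg (div_nonneg (by norm_num) (by linarith only [hE0])) _
  have h2δ'0 : (0:ℝ) ≤ 2*δ' := by linarith only [hδ'0]
  rw [hSvol, hβα, ← ENNReal.ofReal_pow h2δ'0,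
    ← ENNReal.ofReal_mul (by linarith only [hE0] : (0:ℝ) ≤ E/4),
    ← ENNReal.ofReal_mul hK0]
  apply ENNReal.ofReal_le_ofReal
  have hexp : Real.exp ((d:ℝ) * q / 2) = Real.exp (q/2) ^ d := by
    rw [← Real.exp_nat_mul]
    ring_nf
  have hEne : E ≠ 0 := ne_of_gt hE0
  have hsne : Real.sqrt d ≠ 0 := ne_of_gt hsd
  have key : (2/(5*E))^(d+1) * (E/4 * (2*δ')^d) =
      (2/5)^(d+1) / (4 * (2 * Real.sqrt d)^d) * Real.exp ((d:ℝ) * q / 2) := by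
    rw [hexp, hδ'def, hδdef]
    rw [div_pow, div_pow, mul_pow, mul_pow, mul_pow]
    have hEd : E ^ d ≠ 0 := pow_ne_zero _ hEne
    have hsd' : Real.sqrt d ^ d ≠ 0 := pow_ne_zero _ hsne
    field_simp
    ring_nf
    have h1 : Real.sqrt d ^ d * (Real.sqrt d)⁻¹ ^ d = 1 := by
      rw [← mul_pow, mul_inv_cancel₀ hsne, one_pow]
    have h2 : (1/4:ℝ) ^ d * 2 ^ (d * 2) = 1 := by
      rw [pow_mul', ← mul_pow]; norm_num
    linear_combination (E * E ^ d * Real.exp (q * (1 / 2)) ^ d * (1/4:ℝ) ^ d * 2 ^ (d * 2)) * h1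
      + (E * E ^ d * Real.exp (q * (1 / 2)) ^ d) * h2
  rw [key]
end
end

section
/- Fix r0 ≥ 2, radii r0 ≤ r3 ≤ r0 + δ with δ ≤ 1, angles α ≥ 0 and a constant A ≥ 1 with A e^{-r0} ≤ π/3. Let r' ∈ [r0 − 1, r0]. If θ' and θ3 are angles with θ' ≤ α + A e^{-r0} and θ3 ≥ α + 3 A e^{-r0}, then cosh(r0) cosh(r') − cos(θ') sinh(r0) sinh(r') ≤ cosh(r0) cosh(r3) − cos(θ3) sinh(r0) sinh(r3); equivalently, by the hyperbolic law of cosines, the point at radius r' and angular separation θ' from a base point on S(r0) is at most as far as the point at radius r3 and angular separation θ3, provided sinh(r') ≤ sinh(r0) ≤ sinh(r3) and 1 − cos(θ') ≤ 1 − cos(θ3) with θ', θ3 ∈ [0, π]. -/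
open Real

private lemma aux_cosh_sub_one (u : ℝ) (hu : 0 ≤ u) : Real.cosh u - 1 ≤ u * Real.sinh u := by
  have hx : (1:ℝ) ≤ Real.exp u := Real.one_le_exp hu
  have h : 1 - u ≤ Real.exp (-u) := by linarith [Real.add_one_le_exp (-u)]
  rw [Real.cosh_eq, Real.sinh_eq, Real.exp_neg] at *
  have hx0 : 0 < Real.exp u := Real.exp_pos u
  have hinv : Real.exp u * (Real.exp u)⁻¹ = 1 := mul_inv_cancel₀ (ne_of_gt hx0)
  have h2 : Real.exp u - 1 ≤ u * Real.exp u := by nlinarith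
  nlinarith [mul_nonneg (sub_nonneg.mpr hx) (sub_nonneg.mpr hx), inv_pos.mpr hx0,
    mul_le_mul_of_nonneg_right h2 (sub_nonneg.mpr hx)]

private lemma aux_sinh_sub (x y : ℝ) (hy : 0 ≤ y) (hxy : y ≤ x) :
    x - y ≤ Real.sinh x - Real.sinh y := by
  have h1 : Real.sinh x = Real.sinh (x - y) * Real.cosh y + Real.cosh (x - y) * Real.sinh y := by
    rw [← Real.sinh_add]; ring_nf
  have h2 : x - y ≤ Real.sinh (x - y) := Real.self_le_sinh_iff.mpr (by linarith)
  nlinarith [Real.one_le_cosh y, Real.one_le_cosh (x - y), Real.sinh_nonneg_iff.mpr hy]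

private lemma aux_cosh_one : Real.cosh 1 ≤ 1.544 := by
  rw [Real.cosh_eq, Real.exp_neg]
  have h1 := Real.exp_one_lt_d9
  have h2 := Real.exp_one_gt_d9
  have h3 : (0:ℝ) < Real.exp 1 := Real.exp_pos 1
  have hinv : (Real.exp 1)⁻¹ ≤ 0.368 := by
    rw [inv_le_comm₀ h3 (by norm_num)]; nlinarith
  linarith

private lemma aux_exp_sinh (r₀ : ℝ) (hr₀ : 2 ≤ r₀) :
    49/100 ≤ Real.exp (-r₀) * Real.sinh r₀ := by
  have h1 : Real.exp (-r₀) * Real.sinh r₀ = (1 - (Real.exp (-r₀))^2) / 2 := by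
    rw [Real.sinh_eq, Real.exp_neg]
    have := Real.exp_pos r₀
    field_simp
  have h2 : Real.exp (-r₀) ≤ Real.exp (-2) := Real.exp_le_exp.mpr (by linarith)
  have h3 : Real.exp (-2) ≤ 0.136 := by
    rw [show (-2:ℝ) = -1 + -1 by norm_num, Real.exp_add, Real.exp_neg]
    have h2 := Real.exp_one_gt_d9
    have h3 : (0:ℝ) < Real.exp 1 := Real.exp_pos 1
    have : (Real.exp 1)⁻¹ ≤ 0.368 := by
      rw [inv_le_comm₀ h3 (by norm_num)]; nlinarith
    nlinarith [inv_pos.mpr h3]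
  have h4 : 0 ≤ Real.exp (-r₀) := (Real.exp_pos _).le
  rw [h1]; nlinarith

private lemma aux_sinh_two : (3:ℝ) ≤ Real.sinh 2 := by
  rw [Real.sinh_eq, Real.exp_neg]
  have h2 := Real.exp_one_gt_d9
  have h3 : (0:ℝ) < Real.exp 2 := Real.exp_pos 2
  have he2 : (7:ℝ) ≤ Real.exp 2 := by
    rw [show (2:ℝ) = 1 + 1 by norm_num, Real.exp_add]; nlinarith
  have : (Real.exp 2)⁻¹ ≤ 1 := by rw [inv_le_one_iff₀]; right; linarith
  linarith

set_option maxHeartbeats 1600000 in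
/-- Distance comparison via the hyperbolic law of cosines: with `r₀ ≥ 2`,
`r₀ ≤ r₃ ≤ r₀ + δ`, `δ ≤ 1`, `α ≥ 0`, `A ≥ 1`, `A e^{-r₀} ≤ π/3`,
`r' ∈ [r₀ − 1, r₀]`, angular separations `θ', θ₃ ∈ [0, π]` with
`θ' ≤ α + A e^{-r₀}` and `θ₃ ≥ α + 3A e^{-r₀}`, and provided
`sinh r' ≤ sinh r₀ ≤ sinh r₃` and `1 − cos θ' ≤ 1 − cos θ₃`, one has
`cosh r₀ cosh r' − cos θ' sinh r₀ sinh r' ≤ cosh r₀ cosh r₃ − cos θ₃ sinh r₀ sinh r₃`,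
i.e. the point at radius `r'` and angle `θ'` from a base point of `S(r₀)` is at most
as far from it as the point at radius `r₃` and angle `θ₃`. -/
theorem law_of_cosines_comparison
    (r₀ r₃ r' δ α A θ' θ₃ : ℝ)
    (hr₀ : 2 ≤ r₀) (hδ : δ ≤ 1) (hr₃ : r₀ ≤ r₃) (hr₃' : r₃ ≤ r₀ + δ)
    (hα : 0 ≤ α) (hA : 1 ≤ A) (hAsmall : A * Real.exp (-r₀) ≤ π / 3)
    (hr'l : r₀ - 1 ≤ r') (hr'u : r' ≤ r₀)
    (hθ'0 : 0 ≤ θ') (hθ'π : θ' ≤ π) (hθ₃0 : 0 ≤ θ₃) (hθ₃π : θ₃ ≤ π)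
    (hθ' : θ' ≤ α + A * Real.exp (-r₀)) (hθ₃ : α + 3 * A * Real.exp (-r₀) ≤ θ₃)
    (hsinh : Real.sinh r' ≤ Real.sinh r₀ ∧ Real.sinh r₀ ≤ Real.sinh r₃)
    (hcos : 1 - Real.cos θ' ≤ 1 - Real.cos θ₃) :
    Real.cosh r₀ * Real.cosh r' - Real.cos θ' * Real.sinh r₀ * Real.sinh r' ≤
      Real.cosh r₀ * Real.cosh r₃ - Real.cos θ₃ * Real.sinh r₀ * Real.sinh r₃ := by
  obtain ⟨hs1, hs2⟩ := hsinh
  set e := A * Real.exp (-r₀) with he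
  have he0 : 0 < e := by positivity
  have hθ₃e : α + 3 * e ≤ θ₃ := by
    have : 3 * e = 3 * A * Real.exp (-r₀) := by rw [he]; ring
    linarith
  have hS2 : Real.sinh 2 ≤ Real.sinh r₀ := Real.sinh_le_sinh.mpr hr₀
  have hS3 : (3:ℝ) ≤ Real.sinh r₀ := le_trans aux_sinh_two hS2
  have hS0 : 0 < Real.sinh r₀ := by linarith
  have hs0 : 0 ≤ Real.sinh r' := Real.sinh_nonneg_iff.mpr (by linarith)
  have hc'1 : Real.cos θ' ≤ 1 := Real.cos_le_one θ'
  have hc31 : Real.cos θ₃ ≤ 1 := Real.cos_le_one θ₃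
  have hD0 : 0 ≤ Real.cos θ' - Real.cos θ₃ := by linarith
  have hcoshu : Real.cosh (r₀ - r') ≤ Real.cosh 1 := by
    rw [Real.cosh_le_cosh]
    rw [abs_of_nonneg (by linarith), abs_of_nonneg (by norm_num)]
    linarith
  have hcosh1 : Real.cosh (r₀ - r') ≤ 1.544 := le_trans hcoshu aux_cosh_one
  -- The key inequality
  have key : Real.cosh (r₀ - r') + Real.sinh r₀ * Real.sinh r'
      - Real.cos θ' * (Real.sinh r₀ * Real.sinh r')
      ≤ 1 + Real.sinh r₀ * Real.sinh r₀ - Real.cos θ₃ * (Real.sinh r₀ * Real.sinh r₀) := by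
    rcases le_or_gt (α + 2 * e) (π / 2) with hcase | hcase
    · -- angles small: use the angular gap
      have hα3π : α + 3 * e ≤ π := by linarith
      have hc1 : Real.cos (α + e) ≤ Real.cos θ' :=
        Real.cos_le_cos_of_nonneg_of_le_pi hθ'0 (by linarith) hθ'
      have hc2 : Real.cos θ₃ ≤ Real.cos (α + 3 * e) :=
        Real.cos_le_cos_of_nonneg_of_le_pi (by positivity) hθ₃π hθ₃e
      have hc3 : Real.cos (α + e) - Real.cos (α + 3 * e)
          = 2 * Real.sin (α + 2 * e) * Real.sin e := by
        rw [Real.cos_sub_cos, show (α + e + (α + 3 * e)) / 2 = α + 2 * e by ring,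
          show (α + e - (α + 3 * e)) / 2 = -e by ring, Real.sin_neg]
        ring
      have hpi2 : 0 < π / 2 := by positivity
      have hmono : Real.sin (2 * e) ≤ Real.sin (α + 2 * e) := by
        apply (Real.strictMonoOn_sin.monotoneOn)
          ⟨by linarith, by linarith⟩ ⟨by linarith, by linarith⟩ (by linarith)
      have hD : 2 * Real.sin (2 * e) * Real.sin e ≤ Real.cos θ' - Real.cos θ₃ := by
        have hse : 0 ≤ Real.sin e := Real.sin_nonneg_of_nonneg_of_le_pi he0.le (by linarith)
        nlinarith
      have hpos : 0 ≤ (1 - Real.cos θ') *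
          (Real.sinh r₀ * Real.sinh r₀ - Real.sinh r₀ * Real.sinh r') := by
        apply mul_nonneg (by linarith)
        nlinarith
      have hring : 1 + Real.sinh r₀ * Real.sinh r₀ - Real.cos θ₃ * (Real.sinh r₀ * Real.sinh r₀)
          - (Real.cosh (r₀ - r') + Real.sinh r₀ * Real.sinh r'
            - Real.cos θ' * (Real.sinh r₀ * Real.sinh r'))
          = (Real.cos θ' - Real.cos θ₃) * (Real.sinh r₀ * Real.sinh r₀)
            + (1 - Real.cos θ') * (Real.sinh r₀ * Real.sinh r₀ - Real.sinh r₀ * Real.sinh r')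
            + (1 - Real.cosh (r₀ - r')) := by ring
      rcases le_or_gt e (1/2) with he2 | he2
      · -- e ≤ 1/2
        have hsin : 15/16 * e ≤ Real.sin e := by
          have h := Real.sin_gt_sub_cube he0
          have q1 : (0:ℝ) ≤ 1/4 - e^2 := by nlinarith
          have q2 : e^3 ≤ e/4 := by nlinarith [mul_nonneg he0.le q1]
          nlinarith
        have hcos' : 7/8 ≤ Real.cos e := by
          have := Real.one_sub_sq_div_two_le_cos (x := e)
          nlinarith
        have hsin2 : Real.sin (2 * e) = 2 * Real.sin e * Real.cos e := Real.sin_two_mul e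
        have hDe : 1575/512 * e^2 ≤ Real.cos θ' - Real.cos θ₃ := by
          have p1 : (15/16*e)^2 ≤ (Real.sin e)^2 := by nlinarith
          have p2 : (15/16*e)^2 * (7/8) ≤ (Real.sin e)^2 * Real.cos e :=
            mul_le_mul p1 hcos' (by norm_num) (sq_nonneg _)
          have p3 : 2 * Real.sin (2*e) * Real.sin e = 4 * ((Real.sin e)^2 * Real.cos e) := by
            rw [hsin2]; ring
          nlinarith
        have heS : 49/100 ≤ e * Real.sinh r₀ := by
          have h := aux_exp_sinh r₀ hr₀
          have : Real.exp (-r₀) * Real.sinh r₀ ≤ e * Real.sinh r₀ := by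
            rw [he]
            nlinarith [mul_nonneg (mul_nonneg (sub_nonneg.mpr hA) (Real.exp_pos (-r₀)).le) hS0.le]
          linarith
        have hES2 : (2401:ℝ)/10000 ≤ e^2 * (Real.sinh r₀ * Real.sinh r₀) := by
          have := mul_le_mul heS heS (by norm_num) (mul_nonneg he0.le hS0.le)
          nlinarith
        have hmul : 1575/512 * (e^2 * (Real.sinh r₀ * Real.sinh r₀))
            ≤ (Real.cos θ' - Real.cos θ₃) * (Real.sinh r₀ * Real.sinh r₀) := by
          have := mul_le_mul_of_nonneg_right hDe (mul_nonneg hS0.le hS0.le)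
          linarith [this]
        linarith [hring, hcosh1, hpos, hmul, hES2]
      · -- 1/2 < e ≤ π/4
        have hepi4 : e ≤ π / 4 := by linarith
        have hsinE : 15/32 ≤ Real.sin e := by
          have h12 : (15:ℝ)/32 ≤ Real.sin (1/2) := by
            have := Real.sin_gt_sub_cube (by norm_num : (0:ℝ) < 1/2)
            norm_num at this ⊢; linarith
          have : Real.sin (1/2) ≤ Real.sin e := by
            apply (Real.strictMonoOn_sin.monotoneOn)
              ⟨by linarith, by linarith⟩ ⟨by linarith, by linarith⟩ (by linarith)
          linarith
        have hsin2E : 3/4 ≤ Real.sin (2 * e) := by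
          have h1 : (3:ℝ)/4 ≤ Real.sin 1 := by
            have := Real.sin_gt_sub_cube (by norm_num : (0:ℝ) < 1)
            norm_num at this ⊢; linarith
          have : Real.sin 1 ≤ Real.sin (2 * e) := by
            apply (Real.strictMonoOn_sin.monotoneOn)
              ⟨by linarith [Real.pi_pos], by linarith⟩ ⟨by linarith, by linarith⟩ (by linarith)
          linarith
        have hsinpos : (0:ℝ) ≤ Real.sin (2 * e) := by linarith
        have hprod : (3:ℝ)/4 * (15/32) ≤ Real.sin (2 * e) * Real.sin e :=
          mul_le_mul hsin2E hsinE (by norm_num) hsinpos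
        have hDbig : 45/64 ≤ Real.cos θ' - Real.cos θ₃ := by linarith [hD, hprod]
        have hmul : 45/64 * (Real.sinh r₀ * Real.sinh r₀)
            ≤ (Real.cos θ' - Real.cos θ₃) * (Real.sinh r₀ * Real.sinh r₀) :=
          mul_le_mul_of_nonneg_right hDbig (mul_nonneg hS0.le hS0.le)
        have hS9 : (9:ℝ) ≤ Real.sinh r₀ * Real.sinh r₀ := by
          nlinarith [mul_le_mul hS3 hS3 (by norm_num : (0:ℝ) ≤ 3) hS0.le]
        linarith [hring, hcosh1, hpos, hmul, hS9]
    · -- θ₃ ≥ π/2: cos θ₃ ≤ 0, use the radial gap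
      have hcos3 : Real.cos θ₃ ≤ 0 := by
        apply Real.cos_nonpos_of_pi_div_two_le_of_le
        · linarith [hθ₃e]
        · linarith [Real.pi_pos]
      have hu0 : 0 ≤ r₀ - r' := by linarith
      have h1 : Real.cosh (r₀ - r') - 1 ≤ (r₀ - r') * Real.sinh (r₀ - r') :=
        aux_cosh_sub_one _ hu0
      have h2 : Real.sinh (r₀ - r') ≤ Real.sinh r₀ := Real.sinh_le_sinh.mpr (by linarith)
      have h3 : r₀ - r' ≤ Real.sinh r₀ - Real.sinh r' := aux_sinh_sub r₀ r' (by linarith) hr'u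
      have k1 : (r₀ - r') * Real.sinh (r₀ - r') ≤ (r₀ - r') * Real.sinh r₀ :=
        mul_le_mul_of_nonneg_left h2 hu0
      have k2 : Real.sinh r₀ * (r₀ - r') ≤ Real.sinh r₀ * (Real.sinh r₀ - Real.sinh r') :=
        mul_le_mul_of_nonneg_left h3 hS0.le
      have k3 : Real.sinh r₀ * (Real.sinh r₀ - Real.sinh r')
          ≤ (1 - Real.cos θ₃) * (Real.sinh r₀ * (Real.sinh r₀ - Real.sinh r')) := by
        nlinarith [mul_nonneg hS0.le (sub_nonneg.mpr hs1)]
      have k4 : 0 ≤ (Real.cos θ' - Real.cos θ₃) * (Real.sinh r₀ * Real.sinh r') :=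
        mul_nonneg hD0 (mul_nonneg hS0.le hs0)
      have hringB : 1 + Real.sinh r₀ * Real.sinh r₀ - Real.cos θ₃ * (Real.sinh r₀ * Real.sinh r₀)
          - (Real.cosh (r₀ - r') + Real.sinh r₀ * Real.sinh r'
            - Real.cos θ' * (Real.sinh r₀ * Real.sinh r'))
          = (1 - Real.cos θ₃) * (Real.sinh r₀ * (Real.sinh r₀ - Real.sinh r'))
            + (Real.cos θ' - Real.cos θ₃) * (Real.sinh r₀ * Real.sinh r')
            + (1 - Real.cosh (r₀ - r')) := by ring
      linarith [h1, k1, k2, k3, k4, hringB]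
  -- Assemble
  have hsub1 : Real.cosh (r₀ - r')
      = Real.cosh r₀ * Real.cosh r' - Real.sinh r₀ * Real.sinh r' := Real.cosh_sub r₀ r'
  have hsub2 : Real.cosh (r₃ - r₀)
      = Real.cosh r₃ * Real.cosh r₀ - Real.sinh r₃ * Real.sinh r₀ := Real.cosh_sub r₃ r₀
  have hone : 1 ≤ Real.cosh (r₃ - r₀) := Real.one_le_cosh _
  have hc3 : (1 - Real.cos θ₃) * (Real.sinh r₀ * Real.sinh r₀)
      ≤ (1 - Real.cos θ₃) * (Real.sinh r₀ * Real.sinh r₃) := by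
    apply mul_le_mul_of_nonneg_left _ (by linarith)
    exact mul_le_mul_of_nonneg_left hs2 hS0.le
  linarith [key, hsub1, hsub2, hone, hc3]
end
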